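/- Suppose functions δ, d, α, α̃, Q, Z, p, γ on appropriate domains satisfy, for all s, s̃ in S: d(h(s), h(s̃)) + α(h(s)) + α̃(h(s̃)) = d(s, s̃) − log Q(s̃) + log Z(s) + log p(s̃) + γ(s), where d is symmetric and satisfies d(u,u) = 0 for all u. Then d(h(s), h(s̃)) = d(s, s̃) for all s, s̃. -/
import Mathlib

/-- If for all s, s̃ in S,
`d(h(s),h(s̃)) + α(h(s)) + α̃(h(s̃)) = d(s,s̃) − log Q(s̃) + log Z(s) + log p(s̃) + γ(s)`,
with `d` symmetric and vanishing on the diagonal, then `d(h(s),h(s̃)) = d(s,s̃)`. -/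
theorem distance_preservation_from_critic_identity {n : ℕ}
    (S : Set (Fin n → ℝ)) (h : (Fin n → ℝ) → (Fin n → ℝ))
    (d : (Fin n → ℝ) → (Fin n → ℝ) → ℝ)
    (α αt γ : (Fin n → ℝ) → ℝ) (Q Z p : (Fin n → ℝ) → ℝ)
    (hQ : ∀ s, 0 < Q s) (hZ : ∀ s, 0 < Z s) (hp : ∀ s, 0 < p s)
    (hdsymm : ∀ u v, d u v = d v u) (hd0 : ∀ u, d u u = 0)
    (heq : ∀ s ∈ S, ∀ t ∈ S,
      d (h s) (h t) + α (h s) + αt (h t)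
        = d s t - Real.log (Q t) + Real.log (Z s) + Real.log (p t) + γ s) :
    ∀ s ∈ S, ∀ t ∈ S, d (h s) (h t) = d s t := by
  intro s hs t ht
  have hss := heq s hs s hs
  have htt := heq t ht t ht
  have hst := heq s hs t ht
  have hts := heq t ht s hs
  have h1 := hdsymm (h s) (h t)
  have h2 := hdsymm s t
  have h3 := hd0 (h s)
  have h4 := hd0 (h t)
  have h5 := hd0 s
  have h6 := hd0 t
  linarith
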